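/- arXiv:1909.01820 — 2 statements merged into one kernel-verified Lean document; each statement's English description precedes it below -/
import Mathlib

section
/- Let w > 0 and ξ > 0, and let ψ₁ = r₁ e^{iφ₁} and ψ₂ = r₂ e^{iφ₂} be complex numbers with r₁, r₂ ≥ 0 and φ₁, φ₂ ∈ ℝ. Define A = (e^{w/(2ξ)} ψ₁ − e^{−w/(2ξ)} ψ₂)/(2 sinh(w/ξ)) and B = (e^{w/(2ξ)} ψ₂ − e^{−w/(2ξ)} ψ₁)/(2 sinh(w/ξ)). Then the Josephson current j = (2i/ξ)(conj(B)·A − conj(A)·B) satisfies j = i(conj(ψ₂)ψ₁ − conj(ψ₁)ψ₂)/(ξ sinh(w/ξ)) = (2 r₁ r₂ /(ξ sinh(w/ξ))) · sin(φ₂ − φ₁). In particular j is real and proportional to the sine of the phase difference of the two order parameters. -/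
open Complex in
private lemma jos_aux (a b p q p' q' s x : ℂ) (hs : s ≠ 0) (hx : x ≠ 0)
    (h : a * a - b * b = 2 * s) :
    (2 * I / x) * (((a * q' - b * p') / (2 * s)) * ((a * p - b * q) / (2 * s))
      - ((a * p' - b * q') / (2 * s)) * ((a * q - b * p) / (2 * s)))
      = I * (q' * p - p' * q) / (x * s) := by
  field_simp
  linear_combination (q' * p - p' * q) * h

set_option maxHeartbeats 1000000 in
/-- DC Josephson effect: for order parameters `ψ₁ = r₁ e^{iφ₁}` and `ψ₂ = r₂ e^{iφ₂}` on
either side of a junction of width `w` with decay length `ξ`, the supercurrent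
`j = (2i/ξ)(B* A − A* B)` carried by the field `ψ(x) = A e^{−x/ξ} + B e^{x/ξ}` equals
`i(ψ₂* ψ₁ − ψ₁* ψ₂)/(ξ sinh(w/ξ)) = (2 r₁ r₂/(ξ sinh(w/ξ))) sin(φ₂ − φ₁)`;
in particular `j` is real and proportional to the sine of the phase difference. -/
theorem josephson_current (w ξ : ℝ) (hw : 0 < w) (hξ : 0 < ξ)
    (r₁ r₂ φ₁ φ₂ : ℝ) (hr₁ : 0 ≤ r₁) (hr₂ : 0 ≤ r₂) :
    let ψ₁ : ℂ := (r₁ : ℂ) * Complex.exp (Complex.I * (φ₁ : ℂ))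
    let ψ₂ : ℂ := (r₂ : ℂ) * Complex.exp (Complex.I * (φ₂ : ℂ))
    let A : ℂ := (Complex.exp ((w / (2 * ξ) : ℝ) : ℂ) * ψ₁
        - Complex.exp ((-(w / (2 * ξ)) : ℝ) : ℂ) * ψ₂) / ((2 * Real.sinh (w / ξ) : ℝ) : ℂ)
    let B : ℂ := (Complex.exp ((w / (2 * ξ) : ℝ) : ℂ) * ψ₂
        - Complex.exp ((-(w / (2 * ξ)) : ℝ) : ℂ) * ψ₁) / ((2 * Real.sinh (w / ξ) : ℝ) : ℂ)
    let j : ℂ := (2 * Complex.I / (ξ : ℂ)) * (starRingEnd ℂ B * A - starRingEnd ℂ A * B)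
    j = Complex.I * (starRingEnd ℂ ψ₂ * ψ₁ - starRingEnd ℂ ψ₁ * ψ₂)
        / ((ξ * Real.sinh (w / ξ) : ℝ) : ℂ) ∧
    j = (((2 * r₁ * r₂ / (ξ * Real.sinh (w / ξ))) * Real.sin (φ₂ - φ₁) : ℝ) : ℂ) ∧
    j.im = 0 := by
  intro ψ₁ ψ₂ A B j
  have hs : 0 < Real.sinh (w / ξ) := Real.sinh_pos_iff.mpr (div_pos hw hξ)
  have hsC : ((Real.sinh (w / ξ) : ℝ) : ℂ) ≠ 0 := by exact_mod_cast hs.ne'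
  have hξC : (ξ : ℂ) ≠ 0 := by exact_mod_cast hξ.ne'
  have ha2 : Complex.exp ((w / (2 * ξ) : ℝ) : ℂ) * Complex.exp ((w / (2 * ξ) : ℝ) : ℂ)
      - Complex.exp ((-(w / (2 * ξ)) : ℝ) : ℂ) * Complex.exp ((-(w / (2 * ξ)) : ℝ) : ℂ)
      = 2 * ((Real.sinh (w / ξ) : ℝ) : ℂ) := by
    rw [← Complex.exp_add, ← Complex.exp_add, ← Complex.ofReal_add, ← Complex.ofReal_add,
      show w / (2 * ξ) + w / (2 * ξ) = w / ξ by ring,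
      show -(w / (2 * ξ)) + -(w / (2 * ξ)) = -(w / ξ) by ring,
      Real.sinh_eq]
    push_cast
    ring
  have key : j = Complex.I * (starRingEnd ℂ ψ₂ * ψ₁ - starRingEnd ℂ ψ₁ * ψ₂)
      / ((ξ * Real.sinh (w / ξ) : ℝ) : ℂ) := by
    show (2 * Complex.I / (ξ : ℂ)) * (starRingEnd ℂ B * A - starRingEnd ℂ A * B) = _
    simp only [A, B, map_div₀, map_sub, map_mul, ← Complex.exp_conj, Complex.conj_ofReal,
      Complex.ofReal_mul, Complex.ofReal_ofNat, map_ofNat]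
    exact jos_aux _ _ ψ₁ ψ₂ (starRingEnd ℂ ψ₁) (starRingEnd ℂ ψ₂)
      ((Real.sinh (w / ξ) : ℝ) : ℂ) (ξ : ℂ) hsC hξC ha2
  have key2 : j = (((2 * r₁ * r₂ / (ξ * Real.sinh (w / ξ))) * Real.sin (φ₂ - φ₁) : ℝ) : ℂ) := by
    rw [key]
    simp only [ψ₁, ψ₂, map_mul, Complex.conj_ofReal, ← Complex.exp_conj,
      Complex.conj_I, Complex.conj_ofReal]
    rw [show -Complex.I * (φ₁ : ℂ) = ((-φ₁ : ℝ) : ℂ) * Complex.I by push_cast; ring,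
      show -Complex.I * (φ₂ : ℂ) = ((-φ₂ : ℝ) : ℂ) * Complex.I by push_cast; ring,
      show Complex.I * (φ₁ : ℂ) = (φ₁ : ℂ) * Complex.I by ring,
      show Complex.I * (φ₂ : ℂ) = (φ₂ : ℂ) * Complex.I by ring]
    rw [Complex.exp_mul_I, Complex.exp_mul_I, Complex.exp_mul_I, Complex.exp_mul_I,
      Real.sin_sub]
    simp only [Complex.ofReal_neg, Complex.cos_neg, Complex.sin_neg]
    push_cast
    field_simp
    linear_combination (2 * (r₁ : ℂ) * r₂ *
      (Complex.sin φ₂ * Complex.cos φ₁ - Complex.cos φ₂ * Complex.sin φ₁) *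
      (-((Complex.sinh ((w : ℂ) / (ξ : ℂ)))⁻¹))) * Complex.I_sq
  exact ⟨key, key2, by rw [key2]; exact Complex.ofReal_im _⟩
end

section
/- Let ξ > 0 and define f : ℝ³ ∖ {0} → ℝ by f(x) = exp(−‖x‖/ξ)/‖x‖. Then at every x ≠ 0 the Laplacian of f satisfies Σ_{n=1}^{3} ∂²f/∂x_n²(x) = f(x)/ξ². Equivalently, for r > 0 and c ≠ 0 with ξ = √(c²/r), the response profile δo(x) = (μ₀/(4πc²)) e^{−‖x‖/ξ}/‖x‖ satisfies the linearized Ginzburg–Landau equation −c² Δ(δo)(x) + r · δo(x) = 0 for all x ≠ 0. -/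
noncomputable section YukawaAux
local notation "E3" => EuclideanSpace ℝ (Fin 3)
variable (ξ : ℝ)

def ykφd (t : ℝ) : ℝ := -Real.exp (-t / ξ) * (t + ξ) / (ξ * t ^ 2)
def ykψ (t : ℝ) : ℝ := ykφd ξ t / t
def ykψd (t : ℝ) : ℝ := Real.exp (-t / ξ) * (t ^ 2 + 3 * ξ * t + 3 * ξ ^ 2) / (ξ ^ 2 * t ^ 4)

lemma yk_hasFDerivAt_norm (x : E3) (hx : x ≠ 0) :
    HasFDerivAt (fun y : E3 => ‖y‖) (‖x‖⁻¹ • innerSL ℝ x) x := by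
  have hn : ‖x‖ ≠ 0 := norm_ne_zero_iff.2 hx
  have h1 := (hasStrictFDerivAt_norm_sq x).hasFDerivAt
  have h2 := (Real.hasDerivAt_sqrt (pow_ne_zero 2 hn)).comp_hasFDerivAt x h1
  refine (h2.congr_fderiv ?_).congr_of_eventuallyEq ?_
  · ext v
    simp [Real.sqrt_sq (norm_nonneg x)]
    ring
  · filter_upwards with y
    simp [Function.comp, Real.sqrt_sq (norm_nonneg y)]

lemma yk_hasDerivAt_exp (t : ℝ) :
    HasDerivAt (fun s : ℝ => Real.exp (-s / ξ)) (Real.exp (-t / ξ) * (-1 / ξ)) t := by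
  have h : HasDerivAt (fun s : ℝ => -s / ξ) (-1 / ξ) t := by
    simpa using ((hasDerivAt_id t).neg.div_const ξ)
  exact h.exp

lemma yk_hasDerivAt_φ (hξ : 0 < ξ) {t : ℝ} (ht : t ≠ 0) :
    HasDerivAt (fun s : ℝ => Real.exp (-s / ξ) / s) (ykφd ξ t) t := by
  have h := (yk_hasDerivAt_exp ξ t).div (hasDerivAt_id t) ht
  refine h.congr_deriv ?_
  unfold ykφd id
  field_simp
  ring

lemma yk_hasDerivAt_ψ (hξ : 0 < ξ) {t : ℝ} (ht : t ≠ 0) :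
    HasDerivAt (ykψ ξ) (ykψd ξ t) t := by
  have hnum : HasDerivAt (fun s : ℝ => -Real.exp (-s / ξ) * (s + ξ))
      (Real.exp (-t / ξ) * (1 / ξ) * (t + ξ) + -Real.exp (-t / ξ) * 1) t := by
    have := ((yk_hasDerivAt_exp ξ t).neg.mul ((hasDerivAt_id t).add_const ξ))
    refine this.congr_deriv ?_
    simp only [id_eq, Pi.neg_apply]
    ring
  have hden : HasDerivAt (fun s : ℝ => ξ * s ^ 2) (ξ * (2 * t)) t := by
    simpa using ((hasDerivAt_pow 2 t).const_mul ξ)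
  have hφd : HasDerivAt (ykφd ξ)
      (((Real.exp (-t / ξ) * (1 / ξ) * (t + ξ) + -Real.exp (-t / ξ) * 1) * (ξ * t ^ 2)
        - -Real.exp (-t / ξ) * (t + ξ) * (ξ * (2 * t))) / (ξ * t ^ 2) ^ 2) t :=
    hnum.div hden (by positivity)
  have h := hφd.div (hasDerivAt_id t) ht
  refine h.congr_deriv ?_
  unfold ykψd ykφd id
  field_simp
  ring

lemma yk_fderiv_apply (hξ : 0 < ξ) (n : Fin 3) (y : E3) (hy : y ≠ 0) :
    fderiv ℝ (fun z : E3 => Real.exp (-‖z‖ / ξ) / ‖z‖) y (EuclideanSpace.single n 1)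
      = ykψ ξ ‖y‖ * y n := by
  have hn : ‖y‖ ≠ 0 := norm_ne_zero_iff.2 hy
  have hF : HasFDerivAt (fun z : E3 => Real.exp (-‖z‖ / ξ) / ‖z‖)
      (ykφd ξ ‖y‖ • (‖y‖⁻¹ • innerSL ℝ y)) y :=
    (yk_hasDerivAt_φ ξ hξ hn).comp_hasFDerivAt y (yk_hasFDerivAt_norm y hy)
  rw [hF.fderiv]
  simp [EuclideanSpace.inner_single_right, ykψ]
  field_simp

lemma yk_lap (hξ : 0 < ξ) (x : E3) (hx : x ≠ 0) :
    ∑ n : Fin 3,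
        fderiv ℝ
          (fun y => fderiv ℝ (fun z : E3 =>
              Real.exp (-‖z‖ / ξ) / ‖z‖) y (EuclideanSpace.single n 1))
          x (EuclideanSpace.single n 1)
        = (Real.exp (-‖x‖ / ξ) / ‖x‖) / ξ ^ 2 := by
  have hn : ‖x‖ ≠ 0 := norm_ne_zero_iff.2 hx
  have hterm : ∀ n : Fin 3,
      fderiv ℝ (fun y => fderiv ℝ (fun z : E3 =>
          Real.exp (-‖z‖ / ξ) / ‖z‖) y (EuclideanSpace.single n 1)) x (EuclideanSpace.single n 1)
        = ykψ ξ ‖x‖ + ykψd ξ ‖x‖ * ‖x‖⁻¹ * (x n) ^ 2 := by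
    intro n
    have heq : (fun y : E3 => fderiv ℝ (fun z : E3 =>
        Real.exp (-‖z‖ / ξ) / ‖z‖) y (EuclideanSpace.single n 1))
        =ᶠ[nhds x] fun y => ykψ ξ ‖y‖ * y n := by
      filter_upwards [compl_singleton_mem_nhds hx] with y hy
      exact yk_fderiv_apply ξ hξ n y hy
    rw [heq.fderiv_eq]
    have hG : HasFDerivAt (fun y : E3 => ykψ ξ ‖y‖ * y n)
        (ykψ ξ ‖x‖ • (EuclideanSpace.proj n : E3 →L[ℝ] ℝ)
          + (x n) • (ykψd ξ ‖x‖ • (‖x‖⁻¹ • innerSL ℝ x))) x := by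
      exact ((yk_hasDerivAt_ψ ξ hξ hn).comp_hasFDerivAt x
        (yk_hasFDerivAt_norm x hx)).mul (EuclideanSpace.proj n : E3 →L[ℝ] ℝ).hasFDerivAt
    rw [hG.fderiv]
    simp [EuclideanSpace.inner_single_right, EuclideanSpace.single_apply]
    ring
  rw [Finset.sum_congr rfl fun n _ => hterm n]
  rw [Finset.sum_add_distrib]
  have hsum : ∑ n : Fin 3, (x n) ^ 2 = ‖x‖ ^ 2 := by
    exact (EuclideanSpace.real_norm_sq_eq x).symm
  rw [← Finset.mul_sum, hsum, Finset.sum_const]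
  simp only [Finset.card_univ, Fintype.card_fin, nsmul_eq_mul, Nat.cast_ofNat]
  unfold ykψ ykψd ykφd
  field_simp
  ring



lemma yk_fderiv_const_mul (k : ℝ) (f : EuclideanSpace ℝ (Fin 3) → ℝ)
    (y : EuclideanSpace ℝ (Fin 3)) :
    fderiv ℝ (fun z => k * f z) y = k • fderiv ℝ f y := by
  rcases eq_or_ne k 0 with hk | hk
  · simp [hk]
  · by_cases hd : DifferentiableAt ℝ f y
    · exact fderiv_const_mul hd k
    · have hd2 : ¬ DifferentiableAt ℝ (fun z => k * f z) y := by
        intro h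
        apply hd
        have := h.const_mul k⁻¹
        simpa [inv_mul_cancel_left₀ hk] using this
      rw [fderiv_zero_of_not_differentiableAt hd, fderiv_zero_of_not_differentiableAt hd2,
        smul_zero]

end YukawaAux

/-- The screened-Coulomb (Yukawa) profile `f(x) = e^{−‖x‖/ξ}/‖x‖` on `ℝ³ ∖ {0}`
satisfies `Δf = f/ξ²`; equivalently, the Ginzburg–Landau response
`δo(x) = (μ₀/(4πc²)) e^{−‖x‖/ξ}/‖x‖` with coherence length `ξ = √(c²/r)` satisfies the
linearized equation `−c² Δ(δo) + r δo = 0` away from the origin. -/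
theorem yukawa_profile_solves_linearized_GL (ξ : ℝ) (hξ : 0 < ξ) :
    (∀ x : EuclideanSpace ℝ (Fin 3), x ≠ 0 →
      ∑ n : Fin 3,
        fderiv ℝ
          (fun y => fderiv ℝ (fun z : EuclideanSpace ℝ (Fin 3) =>
              Real.exp (-‖z‖ / ξ) / ‖z‖) y (EuclideanSpace.single n 1))
          x (EuclideanSpace.single n 1)
        = (Real.exp (-‖x‖ / ξ) / ‖x‖) / ξ ^ 2) ∧
    (∀ r c μ₀ : ℝ, 0 < r → c ≠ 0 → ξ = Real.sqrt (c ^ 2 / r) →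
      ∀ x : EuclideanSpace ℝ (Fin 3), x ≠ 0 →
        -c ^ 2 *
            (∑ n : Fin 3,
              fderiv ℝ
                (fun y => fderiv ℝ (fun z : EuclideanSpace ℝ (Fin 3) =>
                    (μ₀ / (4 * Real.pi * c ^ 2)) * (Real.exp (-‖z‖ / ξ) / ‖z‖)) y
                  (EuclideanSpace.single n 1))
                x (EuclideanSpace.single n 1))
          + r * ((μ₀ / (4 * Real.pi * c ^ 2)) * (Real.exp (-‖x‖ / ξ) / ‖x‖)) = 0) := by
  constructor
  · exact fun x hx => yk_lap ξ hξ x hx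
  · intro r c μ₀ hr hc hxi x hx
    set k : ℝ := μ₀ / (4 * Real.pi * c ^ 2) with hk
    have hinner : ∀ n : Fin 3, (fun y : EuclideanSpace ℝ (Fin 3) =>
        fderiv ℝ (fun z : EuclideanSpace ℝ (Fin 3) =>
          k * (Real.exp (-‖z‖ / ξ) / ‖z‖)) y (EuclideanSpace.single n 1))
        = fun y => k * fderiv ℝ (fun z : EuclideanSpace ℝ (Fin 3) =>
          Real.exp (-‖z‖ / ξ) / ‖z‖) y (EuclideanSpace.single n 1) := by
      intro n
      funext y
      rw [yk_fderiv_const_mul k _ y]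
      simp
    have hsum : ∑ n : Fin 3,
        fderiv ℝ (fun y => fderiv ℝ (fun z : EuclideanSpace ℝ (Fin 3) =>
            k * (Real.exp (-‖z‖ / ξ) / ‖z‖)) y (EuclideanSpace.single n 1))
          x (EuclideanSpace.single n 1)
        = k * ((Real.exp (-‖x‖ / ξ) / ‖x‖) / ξ ^ 2) := by
      have : ∀ n : Fin 3,
          fderiv ℝ (fun y => fderiv ℝ (fun z : EuclideanSpace ℝ (Fin 3) =>
              k * (Real.exp (-‖z‖ / ξ) / ‖z‖)) y (EuclideanSpace.single n 1))
            x (EuclideanSpace.single n 1)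
          = k * fderiv ℝ (fun y => fderiv ℝ (fun z : EuclideanSpace ℝ (Fin 3) =>
              Real.exp (-‖z‖ / ξ) / ‖z‖) y (EuclideanSpace.single n 1))
            x (EuclideanSpace.single n 1) := by
        intro n
        rw [hinner n, yk_fderiv_const_mul k _ x]
        simp
      rw [Finset.sum_congr rfl fun n _ => this n, ← Finset.mul_sum, yk_lap ξ hξ x hx]
    rw [hsum]
    have hξ2 : ξ ^ 2 = c ^ 2 / r := by
      rw [hxi, Real.sq_sqrt (by positivity)]
    rw [hξ2]
    have hnx : ‖x‖ ≠ 0 := norm_ne_zero_iff.2 hx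
    field_simp [hc, Real.pi_ne_zero, ne_of_gt hr, hnx]
    ring
end
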